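/- Let s, r ∈ ℂ with s ≠ 0, r ≠ 0, s² ≠ 1, r² ≠ 1; set t = diag(s, s⁻¹), t' = diag(r, r⁻¹) ∈ SL₂(ℂ) and Δ = s − s⁻¹. Regard pairs of matrices as elements of M₂(ℂ) × M₂(ℂ) equipped with its standard topology. Let O₀ = {(A·[[s, 0],[Δ, s⁻¹]]·A⁻¹, A·t'·A⁻¹) : A ∈ SL₂(ℂ)} and O_T = {(A·t·A⁻¹, A·t'·A⁻¹) : A ∈ SL₂(ℂ)}. Then the closure of O₀ in M₂(ℂ) × M₂(ℂ) satisfies closure(O₀) \ O₀ = O_T. -/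

import Mathlib

open Matrix

/-- The orbit `O₀` of `([[s,0],[Δ,s⁻¹]], t')` inside `M₂(ℂ) × M₂(ℂ)`, `Δ = s - s⁻¹`. -/
def orbO0 (s r : ℂ) : Set (Matrix (Fin 2) (Fin 2) ℂ × Matrix (Fin 2) (Fin 2) ℂ) :=
  {p | ∃ A : SpecialLinearGroup (Fin 2) ℂ,
    p = ((A : Matrix (Fin 2) (Fin 2) ℂ) * !![s, 0; s - s⁻¹, s⁻¹] * ((A⁻¹ : SpecialLinearGroup (Fin 2) ℂ) : Matrix (Fin 2) (Fin 2) ℂ),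
         (A : Matrix (Fin 2) (Fin 2) ℂ) * !![r, 0; 0, r⁻¹] * ((A⁻¹ : SpecialLinearGroup (Fin 2) ℂ) : Matrix (Fin 2) (Fin 2) ℂ))}

/-- The orbit `O_T` of `(t, t')` inside `M₂(ℂ) × M₂(ℂ)`. -/
def orbT (s r : ℂ) : Set (Matrix (Fin 2) (Fin 2) ℂ × Matrix (Fin 2) (Fin 2) ℂ) :=
  {p | ∃ A : SpecialLinearGroup (Fin 2) ℂ,
    p = ((A : Matrix (Fin 2) (Fin 2) ℂ) * !![s, 0; 0, s⁻¹] * ((A⁻¹ : SpecialLinearGroup (Fin 2) ℂ) : Matrix (Fin 2) (Fin 2) ℂ),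
         (A : Matrix (Fin 2) (Fin 2) ℂ) * !![r, 0; 0, r⁻¹] * ((A⁻¹ : SpecialLinearGroup (Fin 2) ℂ) : Matrix (Fin 2) (Fin 2) ℂ))}

abbrev M2 := Matrix (Fin 2) (Fin 2) ℂ
abbrev SL2 := SpecialLinearGroup (Fin 2) ℂ

lemma sq_root_exists (w : ℂ) (hw : w ≠ 0) : ∃ z : ℂ, z ≠ 0 ∧ z ^ 2 = w⁻¹ := by
  refine ⟨Complex.exp (-(Complex.log w)/2), Complex.exp_ne_zero _, ?_⟩
  rw [← Complex.exp_nat_mul]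
  push_cast
  rw [show (2:ℂ) * (-(Complex.log w)/2) = -Complex.log w by ring, Complex.exp_neg,
    Complex.exp_log hw]

lemma keyLemma (s r : ℂ) (hrr : r - r⁻¹ ≠ 0) (P Q : M2) (u x : Fin 2 → ℂ) (c c' m : ℂ)
    (hm : m ≠ 0) (hmc : m * c = c') (hu : u ≠ 0) (hx : x ≠ 0)
    (hQu : Q.mulVec u = r • u) (hQx : Q.mulVec x = r⁻¹ • x)
    (hPu : P.mulVec u = s • u + c • x) (hPx : P.mulVec x = s⁻¹ • x) :
    ∃ A : SL2, P = (A : M2) * !![s,0;c',s⁻¹] * ((A⁻¹ : SL2) : M2) ∧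
      Q = (A : M2) * !![r,0;0,r⁻¹] * ((A⁻¹ : SL2) : M2) := by
  -- scalar forms of eigen equations
  have eQu : ∀ i, Q i 0 * u 0 + Q i 1 * u 1 = r * u i := by
    intro i
    have := congrFun hQu i
    simpa [Matrix.mulVec, dotProduct, Fin.sum_univ_two] using this
  have eQx : ∀ i, Q i 0 * x 0 + Q i 1 * x 1 = r⁻¹ * x i := by
    intro i
    have := congrFun hQx i
    simpa [Matrix.mulVec, dotProduct, Fin.sum_univ_two] using this
  have ePu : ∀ i, P i 0 * u 0 + P i 1 * u 1 = s * u i + c * x i := by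
    intro i
    have := congrFun hPu i
    simpa [Matrix.mulVec, dotProduct, Fin.sum_univ_two] using this
  have ePx : ∀ i, P i 0 * x 0 + P i 1 * x 1 = s⁻¹ * x i := by
    intro i
    have := congrFun hPx i
    simpa [Matrix.mulVec, dotProduct, Fin.sum_univ_two] using this
  -- independence
  set δ : ℂ := u 0 * x 1 - u 1 * x 0 with hδdef
  have hune : ∃ i, u i ≠ 0 := by
    by_contra hc'
    push_neg at hc'
    exact hu (funext hc')
  have hδ : δ ≠ 0 := by
    intro h0
    obtain ⟨lam, hl0, hl1⟩ : ∃ lam, x 0 = lam * u 0 ∧ x 1 = lam * u 1 := by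
      rcases show u 0 ≠ 0 ∨ u 1 ≠ 0 by
          rcases hune with ⟨i, hi⟩; fin_cases i; exacts [Or.inl hi, Or.inr hi] with h' | h'
      · refine ⟨x 0 / u 0, by field_simp, ?_⟩
        field_simp
        linear_combination h0
      · refine ⟨x 1 / u 1, ?_, by field_simp⟩
        field_simp
        linear_combination -h0
    have key : ∀ i, r⁻¹ * x i = lam * (r * u i) := by
      intro i
      have h1 := eQx i
      rw [hl0, hl1] at h1
      linear_combination lam * eQu i - h1
    obtain ⟨i, hi⟩ := hune
    have hxi : x i = lam * u i := by fin_cases i <;> assumption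
    have hlam0 : lam = 0 := by
      have h2 : lam * (r⁻¹ - r) * u i = 0 := by
        have := key i
        rw [hxi] at this
        linear_combination this
      rcases mul_eq_zero.mp h2 with h3 | h3
      · rcases mul_eq_zero.mp h3 with h4 | h4
        · exact h4
        · exact absurd (by linear_combination -h4) hrr
      · exact absurd h3 hi
    refine hx (funext fun i => ?_)
    have : x i = lam * u i := by fin_cases i <;> assumption
    rw [this, hlam0, zero_mul]; rfl
  obtain ⟨β, hβ0, hβ2⟩ := sq_root_exists (m * δ) (mul_ne_zero hm hδ)
  have hA'det : (!![m*β*u 0, β*x 0; m*β*u 1, β*x 1] : M2).det = 1 := by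
    rw [Matrix.det_fin_two_of]
    have h2 : m*β*u 0 * (β*x 1) - β*x 0 * (m*β*u 1) = m * β^2 * δ := by
      rw [hδdef]; ring
    rw [h2, hβ2]
    field_simp
  set 𝔸 : SL2 := ⟨!![m*β*u 0, β*x 0; m*β*u 1, β*x 1], hA'det⟩ with h𝔸
  have hco : (𝔸 : M2) = !![m*β*u 0, β*x 0; m*β*u 1, β*x 1] := rfl
  have h1 : (𝔸 : M2) * ((𝔸⁻¹ : SL2) : M2) = 1 := by
    rw [← Matrix.SpecialLinearGroup.coe_mul, mul_inv_cancel, Matrix.SpecialLinearGroup.coe_one]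
  have hPA : P * (𝔸 : M2) = (𝔸 : M2) * !![s,0;c',s⁻¹] := by
    rw [hco]
    ext i j
    fin_cases i <;> fin_cases j <;>
      simp [Matrix.mul_apply, Fin.sum_univ_two]
    · linear_combination (m*β) * ePu 0 + β * x 0 * hmc
    · linear_combination β * ePx 0
    · linear_combination (m*β) * ePu 1 + β * x 1 * hmc
    · linear_combination β * ePx 1
  have hQA : Q * (𝔸 : M2) = (𝔸 : M2) * !![r,0;0,r⁻¹] := by
    rw [hco]
    ext i j
    fin_cases i <;> fin_cases j <;>
      simp [Matrix.mul_apply, Fin.sum_univ_two]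
    · linear_combination (m*β) * eQu 0
    · linear_combination β * eQx 0
    · linear_combination (m*β) * eQu 1
    · linear_combination β * eQx 1
  refine ⟨𝔸, ?_, ?_⟩
  · calc P = P * ((𝔸 : M2) * ((𝔸⁻¹ : SL2) : M2)) := by rw [h1, mul_one]
    _ = (P * (𝔸 : M2)) * ((𝔸⁻¹ : SL2) : M2) := by rw [mul_assoc]
    _ = (𝔸 : M2) * !![s,0;c',s⁻¹] * ((𝔸⁻¹ : SL2) : M2) := by rw [hPA]
  · calc Q = Q * ((𝔸 : M2) * ((𝔸⁻¹ : SL2) : M2)) := by rw [h1, mul_one]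
    _ = (Q * (𝔸 : M2)) * ((𝔸⁻¹ : SL2) : M2) := by rw [mul_assoc]
    _ = (𝔸 : M2) * !![r,0;0,r⁻¹] * ((𝔸⁻¹ : SL2) : M2) := by rw [hQA]

lemma sub_inv_ne (s : ℂ) (hs : s ≠ 0) (hs2 : s ^ 2 ≠ 1) : s - s⁻¹ ≠ 0 := by
  intro h
  have h1 : s = s⁻¹ := by linear_combination h
  exact hs2 (by rw [sq]; nth_rewrite 2 [h1]; exact mul_inv_cancel₀ hs)

def condSet (s r : ℂ) : Set (M2 × M2) :=
  {p | (p.2 - r⁻¹ • (1:M2)) * (p.1 - s • (1:M2)) = 0} ∩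
  {p | (p.1 - s • (1:M2)) * (p.1 - s • (1:M2)) = (s⁻¹ - s) • (p.1 - s • (1:M2))} ∩
  {p | (p.2 - r⁻¹ • (1:M2)) * (p.2 - r⁻¹ • (1:M2)) = (r - r⁻¹) • (p.2 - r⁻¹ • (1:M2))} ∩
  {p | p.1.trace = s + s⁻¹} ∩ {p | p.2.trace = r + r⁻¹}

lemma isClosed_condSet (s r : ℂ) : IsClosed (condSet s r) := by
  have c1 : Continuous fun p : M2 × M2 => p.1 - s • (1:M2) := continuous_fst.sub continuous_const
  have c2 : Continuous fun p : M2 × M2 => p.2 - r⁻¹ • (1:M2) := continuous_snd.sub continuous_const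
  refine IsClosed.inter (IsClosed.inter (IsClosed.inter (IsClosed.inter ?_ ?_) ?_) ?_) ?_
  · exact isClosed_eq (c2.matrix_mul c1) continuous_const
  · exact isClosed_eq (c1.matrix_mul c1) (c1.const_smul (s⁻¹ - s))
  · exact isClosed_eq (c2.matrix_mul c2) (c2.const_smul (r - r⁻¹))
  · exact isClosed_eq continuous_fst.matrix_trace continuous_const
  · exact isClosed_eq continuous_snd.matrix_trace continuous_const

lemma orbO0_subset_condSet (s r : ℂ) : orbO0 s r ⊆ condSet s r := by
  rintro p ⟨A, hp⟩
  set a : M2 := (A : M2) with ha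
  set b : M2 := ((A⁻¹ : SL2) : M2) with hb
  have hab : a * b = 1 := by
    rw [ha, hb, ← Matrix.SpecialLinearGroup.coe_mul, mul_inv_cancel, Matrix.SpecialLinearGroup.coe_one]
  have hba : b * a = 1 := by
    rw [ha, hb, ← Matrix.SpecialLinearGroup.coe_mul, inv_mul_cancel, Matrix.SpecialLinearGroup.coe_one]
  have hconj : ∀ (X : M2) (c : ℂ), a * X * b - c • (1:M2) = a * (X - c • 1) * b := by
    intro X c
    rw [mul_sub, sub_mul, mul_smul_comm, smul_mul_assoc, mul_one, hab]
  have hmm : ∀ X Y : M2, (a * X * b) * (a * Y * b) = a * (X * Y) * b := by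
    intro X Y
    calc (a*X*b) * (a*Y*b) = a*X*((b*a)*(Y*b)) := by simp only [mul_assoc]
    _ = a*(X*Y)*b := by rw [hba, one_mul]; simp only [mul_assoc]
  have htr : ∀ X : M2, (a * X * b).trace = X.trace := by
    intro X
    rw [Matrix.trace_mul_cycle, hba, one_mul]
  have hp1 : p.1 = a * !![s, 0; s - s⁻¹, s⁻¹] * b := by rw [hp]
  have hp2 : p.2 = a * !![r, 0; 0, r⁻¹] * b := by rw [hp]
  have hL0 : (!![s, 0; s - s⁻¹, s⁻¹] : M2) - s • 1 = !![0, 0; s - s⁻¹, s⁻¹ - s] := by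
    ext i j; fin_cases i <;> fin_cases j <;> simp [Matrix.one_apply] <;> ring
  have hK0 : (!![r, 0; 0, r⁻¹] : M2) - r⁻¹ • 1 = !![r - r⁻¹, 0; 0, 0] := by
    ext i j; fin_cases i <;> fin_cases j <;> simp [Matrix.one_apply] <;> ring
  refine ⟨⟨⟨⟨?_, ?_⟩, ?_⟩, ?_⟩, ?_⟩
  · show (p.2 - r⁻¹ • (1:M2)) * (p.1 - s • (1:M2)) = 0
    rw [hp1, hp2, hconj, hconj, hmm, hL0, hK0]
    have : (!![r - r⁻¹, 0; 0, 0] : M2) * !![0, 0; s - s⁻¹, s⁻¹ - s] = 0 := by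
      ext i j; fin_cases i <;> fin_cases j <;> simp [Matrix.mul_apply, Fin.sum_univ_two]
    rw [this, mul_zero, zero_mul]
  · show (p.1 - s • (1:M2)) * (p.1 - s • (1:M2)) = (s⁻¹ - s) • (p.1 - s • (1:M2))
    rw [hp1, hconj, hmm, hL0]
    have : (!![0, 0; s - s⁻¹, s⁻¹ - s] : M2) * !![0, 0; s - s⁻¹, s⁻¹ - s]
        = (s⁻¹ - s) • !![0, 0; s - s⁻¹, s⁻¹ - s] := by
      ext i j; fin_cases i <;> fin_cases j <;>
        simp [Matrix.mul_apply, Fin.sum_univ_two] <;> ring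
    rw [this, mul_smul_comm, smul_mul_assoc]
  · show (p.2 - r⁻¹ • (1:M2)) * (p.2 - r⁻¹ • (1:M2)) = (r - r⁻¹) • (p.2 - r⁻¹ • (1:M2))
    rw [hp2, hconj, hmm, hK0]
    have : (!![r - r⁻¹, 0; 0, 0] : M2) * !![r - r⁻¹, 0; 0, 0]
        = (r - r⁻¹) • !![r - r⁻¹, 0; 0, 0] := by
      ext i j; fin_cases i <;> fin_cases j <;>
        simp [Matrix.mul_apply, Fin.sum_univ_two] <;> ring
    rw [this, mul_smul_comm, smul_mul_assoc]
  · show p.1.trace = s + s⁻¹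
    rw [hp1, htr, Matrix.trace_fin_two_of]
  · show p.2.trace = r + r⁻¹
    rw [hp2, htr, Matrix.trace_fin_two_of]
lemma orbT_subset_closure (s r : ℂ) (A : SL2) :
    ((A : M2) * !![s, 0; 0, s⁻¹] * ((A⁻¹ : SL2) : M2),
     (A : M2) * !![r, 0; 0, r⁻¹] * ((A⁻¹ : SL2) : M2)) ∈ closure (orbO0 s r) := by
  set a : M2 := (A : M2) with ha
  set b : M2 := ((A⁻¹ : SL2) : M2) with hb
  have hDdet : ∀ n : ℕ, (!![(n:ℂ)+1, 0; 0, ((n:ℂ)+1)⁻¹] : M2).det = 1 := by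
    intro n
    rw [Matrix.det_fin_two_of]
    have hn : ((n:ℂ)+1) ≠ 0 := Nat.cast_add_one_ne_zero n
    field_simp
    norm_num
  set D : ℕ → SL2 := fun n => ⟨!![(n:ℂ)+1, 0; 0, ((n:ℂ)+1)⁻¹], hDdet n⟩ with hD
  have hDinv : ∀ n : ℕ, (((D n)⁻¹ : SL2) : M2) = !![((n:ℂ)+1)⁻¹, 0; 0, (n:ℂ)+1] := by
    intro n
    rw [Matrix.SpecialLinearGroup.coe_inv]
    show adjugate !![(n:ℂ)+1, 0; 0, ((n:ℂ)+1)⁻¹] = _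
    rw [Matrix.adjugate_fin_two_of]
    norm_num
  have hseq : ∀ n : ℕ,
      (a * !![s, 0; (s - s⁻¹) * (((n:ℂ)+1)⁻¹ * ((n:ℂ)+1)⁻¹), s⁻¹] * b, a * !![r, 0; 0, r⁻¹] * b)
        ∈ orbO0 s r := by
    intro n
    have hn : ((n:ℂ)+1) ≠ 0 := Nat.cast_add_one_ne_zero n
    refine ⟨A * D n, ?_⟩
    have hcoe : ((A * D n : SL2) : M2) = a * (D n : M2) := by
      rw [Matrix.SpecialLinearGroup.coe_mul]
    have hcoeinv : (((A * D n)⁻¹ : SL2) : M2) = (((D n)⁻¹ : SL2) : M2) * b := by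
      rw [_root_.mul_inv_rev, Matrix.SpecialLinearGroup.coe_mul]
    have hinv : ((n:ℂ)+1)⁻¹ * ((n:ℂ)+1) = 1 := inv_mul_cancel₀ hn
    have hdd : (D n : M2) * (((D n)⁻¹ : SL2) : M2) = 1 := by
      rw [← Matrix.SpecialLinearGroup.coe_mul, mul_inv_cancel, Matrix.SpecialLinearGroup.coe_one]
    have hM1a : (D n : M2) * !![s, 0; s - s⁻¹, s⁻¹]
        = !![s, 0; (s - s⁻¹) * (((n:ℂ)+1)⁻¹ * ((n:ℂ)+1)⁻¹), s⁻¹] * (D n : M2) := by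
      show (!![(n:ℂ)+1, 0; 0, ((n:ℂ)+1)⁻¹] : M2) * _ = _ * !![(n:ℂ)+1, 0; 0, ((n:ℂ)+1)⁻¹]
      ext i j
      fin_cases i <;> fin_cases j <;>
          simp [Matrix.mul_apply, Fin.sum_univ_two] <;>
        first
          | ring1
          | linear_combination (-(s - s⁻¹) * ((n:ℂ)+1)⁻¹) * hinv
          | linear_combination ((s - s⁻¹) * ((n:ℂ)+1)⁻¹) * hinv
    have hM1 : (D n : M2) * !![s, 0; s - s⁻¹, s⁻¹] * (((D n)⁻¹ : SL2) : M2)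
        = !![s, 0; (s - s⁻¹) * (((n:ℂ)+1)⁻¹ * ((n:ℂ)+1)⁻¹), s⁻¹] := by
      rw [hM1a, mul_assoc, hdd, mul_one]
    have hM2a : (D n : M2) * !![r, 0; 0, r⁻¹] = !![r, 0; 0, r⁻¹] * (D n : M2) := by
      show (!![(n:ℂ)+1, 0; 0, ((n:ℂ)+1)⁻¹] : M2) * _ = _ * !![(n:ℂ)+1, 0; 0, ((n:ℂ)+1)⁻¹]
      ext i j
      fin_cases i <;> fin_cases j <;>
          simp [Matrix.mul_apply, Fin.sum_univ_two] <;> ring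
    have hM2 : (D n : M2) * !![r, 0; 0, r⁻¹] * (((D n)⁻¹ : SL2) : M2)
        = !![r, 0; 0, r⁻¹] := by
      rw [hM2a, mul_assoc, hdd, mul_one]
    have e1 : a * (D n : M2) * !![s, 0; s - s⁻¹, s⁻¹] * (((((D n))⁻¹ : SL2) : M2) * b)
        = a * !![s, 0; (s - s⁻¹) * (((n:ℂ)+1)⁻¹ * ((n:ℂ)+1)⁻¹), s⁻¹] * b := by
      conv_rhs => rw [← hM1]
      simp only [mul_assoc]
    have e2 : a * (D n : M2) * !![r, 0; 0, r⁻¹] * (((((D n))⁻¹ : SL2) : M2) * b)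
        = a * !![r, 0; 0, r⁻¹] * b := by
      conv_rhs => rw [← hM2]
      simp only [mul_assoc]
    rw [hcoe, hcoeinv]
    rw [Prod.ext_iff]
    exact ⟨e1.symm, e2.symm⟩
  have h1 : Filter.Tendsto (fun n : ℕ => ((n:ℂ)+1)⁻¹) Filter.atTop (nhds 0) := by
    have heq : (fun n : ℕ => ((n:ℂ)+1)⁻¹) = fun n : ℕ => ((((n:ℝ)+1)⁻¹ : ℝ) : ℂ) := by
      funext n; push_cast; ring
    rw [heq]
    have := (Complex.continuous_ofReal.tendsto 0).comp
      (by simpa [one_div] using tendsto_one_div_add_atTop_nhds_zero_nat)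
    simpa [Function.comp_def] using this
  have h0 : Filter.Tendsto (fun n : ℕ => (s - s⁻¹) * (((n:ℂ)+1)⁻¹ * ((n:ℂ)+1)⁻¹)) Filter.atTop (nhds 0) := by
    have hc : Continuous fun z : ℂ => (s - s⁻¹) * (z * z) :=
      continuous_const.mul (continuous_id.mul continuous_id)
    have := (hc.tendsto 0).comp h1
    simpa [Function.comp_def] using this
  have hinner : Continuous fun c : ℂ => (!![s, 0; c, s⁻¹] : M2) := by
    apply continuous_matrix
    intro i j
    fin_cases i <;> fin_cases j <;> simp <;>
      first
        | exact continuous_const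
        | exact continuous_id
  have hcont : Continuous fun c : ℂ => (a * !![s, 0; c, s⁻¹] * b, a * !![r, 0; 0, r⁻¹] * b) := by
    exact ((continuous_const.matrix_mul hinner).matrix_mul continuous_const).prodMk
      continuous_const
  have hlim := (hcont.tendsto 0).comp h0
  have hlim' : Filter.Tendsto
      (fun n : ℕ => (a * !![s, 0; (s - s⁻¹) * (((n:ℂ)+1)⁻¹ * ((n:ℂ)+1)⁻¹), s⁻¹] * b,
        a * !![r, 0; 0, r⁻¹] * b))
      Filter.atTop (nhds (a * !![s, 0; 0, s⁻¹] * b, a * !![r, 0; 0, r⁻¹] * b)) := by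
    simpa [Function.comp_def] using hlim
  exact mem_closure_of_tendsto hlim' (Filter.Eventually.of_forall hseq)

lemma col_mulVec (M N : M2) (j : Fin 2) :
    M.mulVec (fun i => N i j) = fun i => (M * N) i j := by
  funext i
  simp [Matrix.mulVec, Matrix.mul_apply, dotProduct]

lemma orbT_disjoint (s r : ℂ) (hs : s ≠ 0) (hr : r ≠ 0)
    (hs2 : s ^ 2 ≠ 1) (hr2 : r ^ 2 ≠ 1) (p : M2 × M2)
    (hT : p ∈ orbT s r) : p ∉ orbO0 s r := by
  rintro ⟨B, hpO⟩
  obtain ⟨A, hpT⟩ := hT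
  -- commutation from orbT
  have hcomm : p.1 * p.2 = p.2 * p.1 := by
    set a : M2 := (A : M2) with ha
    set b : M2 := ((A⁻¹ : SL2) : M2) with hb
    have hba : b * a = 1 := by
      rw [ha, hb, ← Matrix.SpecialLinearGroup.coe_mul, inv_mul_cancel, Matrix.SpecialLinearGroup.coe_one]
    have hp1 : p.1 = a * !![s, 0; 0, s⁻¹] * b := by rw [hpT]
    have hp2 : p.2 = a * !![r, 0; 0, r⁻¹] * b := by rw [hpT]
    have hmm : ∀ X Y : M2, (a * X * b) * (a * Y * b) = a * (X * Y) * b := by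
      intro X Y
      calc (a*X*b) * (a*Y*b) = a*X*((b*a)*(Y*b)) := by simp only [mul_assoc]
      _ = a*(X*Y)*b := by rw [hba, one_mul]; simp only [mul_assoc]
    have hdiag : (!![s, 0; 0, s⁻¹] : M2) * !![r, 0; 0, r⁻¹]
        = !![r, 0; 0, r⁻¹] * !![s, 0; 0, s⁻¹] := by
      ext i j
      fin_cases i <;> fin_cases j <;>
        simp [Matrix.mul_apply, Fin.sum_univ_two] <;> ring
    rw [hp1, hp2, hmm, hmm, hdiag]
  -- non-commutation from orbO0
  set a : M2 := (B : M2) with ha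
  set b : M2 := ((B⁻¹ : SL2) : M2) with hb
  have hab : a * b = 1 := by
    rw [ha, hb, ← Matrix.SpecialLinearGroup.coe_mul, mul_inv_cancel, Matrix.SpecialLinearGroup.coe_one]
  have hba : b * a = 1 := by
    rw [ha, hb, ← Matrix.SpecialLinearGroup.coe_mul, inv_mul_cancel, Matrix.SpecialLinearGroup.coe_one]
  have hmm : ∀ X Y : M2, (a * X * b) * (a * Y * b) = a * (X * Y) * b := by
    intro X Y
    calc (a*X*b) * (a*Y*b) = a*X*((b*a)*(Y*b)) := by simp only [mul_assoc]
    _ = a*(X*Y)*b := by rw [hba, one_mul]; simp only [mul_assoc]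
  have hp1 : p.1 = a * !![s, 0; s - s⁻¹, s⁻¹] * b := by rw [hpO]
  have hp2 : p.2 = a * !![r, 0; 0, r⁻¹] * b := by rw [hpO]
  rw [hp1, hp2, hmm, hmm] at hcomm
  have hNN : (!![s, 0; s - s⁻¹, s⁻¹] : M2) * !![r, 0; 0, r⁻¹]
      = a * ((!![s, 0; s - s⁻¹, s⁻¹] : M2) * !![r, 0; 0, r⁻¹]) * b ∧
      (!![r, 0; 0, r⁻¹] : M2) * !![s, 0; s - s⁻¹, s⁻¹]
      = a * ((!![r, 0; 0, r⁻¹] : M2) * !![s, 0; s - s⁻¹, s⁻¹]) * b → True := fun _ => trivial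
  -- recover equality of the uncinjugated products
  have hX : ∀ X Y : M2, a * X * b = a * Y * b → X = Y := by
    intro X Y h
    have := congrArg (fun Z => b * Z * a) h
    calc X = (b * a) * X * (b * a) := by rw [hba, one_mul, mul_one]
    _ = b * (a * X * b) * a := by simp only [mul_assoc]
    _ = b * (a * Y * b) * a := by rw [h]
    _ = (b * a) * Y * (b * a) := by simp only [mul_assoc]
    _ = Y := by rw [hba, one_mul, mul_one]
  have heq := hX _ _ hcomm
  have h10 := congrFun (congrFun heq 1) 0
  simp [Matrix.mul_apply, Fin.sum_univ_two] at h10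
  have hΔ : s - s⁻¹ ≠ 0 := sub_inv_ne s hs hs2
  have hrr : r - r⁻¹ ≠ 0 := sub_inv_ne r hr hr2
  apply hΔ
  have : (s - s⁻¹) * (r - r⁻¹) = 0 := by linear_combination h10
  rcases mul_eq_zero.mp this with h | h
  · exact h
  · exact absurd h hrr

theorem closure_orbO0_diff (s r : ℂ) (hs : s ≠ 0) (hr : r ≠ 0)
    (hs2 : s ^ 2 ≠ 1) (hr2 : r ^ 2 ≠ 1) :
    closure (orbO0 s r) \ orbO0 s r = orbT s r := by
  have hΔ : s - s⁻¹ ≠ 0 := sub_inv_ne s hs hs2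
  have hrr : r - r⁻¹ ≠ 0 := sub_inv_ne r hr hr2
  apply Set.eq_of_subset_of_subset
  · rintro p ⟨hpc, hpn⟩
    have hW : p ∈ condSet s r :=
      closure_minimal (orbO0_subset_condSet s r) (isClosed_condSet s r) hpc
    obtain ⟨⟨⟨⟨hKL, hLL⟩, hKK⟩, htrP⟩, htrQ⟩ := hW
    set P : M2 := p.1 with hP
    set Q : M2 := p.2 with hQdef
    set L : M2 := P - s • 1 with hLdef
    set K : M2 := Q - r⁻¹ • 1 with hKdef
    -- nonvanishing
    have htrL : L.trace = s⁻¹ - s := by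
      rw [hLdef, Matrix.trace_sub, Matrix.trace_smul, Matrix.trace_one, htrP]
      simp; ring
    have htrK : K.trace = r - r⁻¹ := by
      rw [hKdef, Matrix.trace_sub, Matrix.trace_smul, Matrix.trace_one, htrQ]
      simp; ring
    have hLne : L ≠ 0 := by
      intro h
      rw [h, Matrix.trace_zero] at htrL
      exact hΔ (by linear_combination htrL)
    have hKne : K ≠ 0 := by
      intro h
      rw [h, Matrix.trace_zero] at htrK
      exact hrr (by linear_combination -htrK)
    -- matrix identities
    have hQas : Q = K + r⁻¹ • 1 := by rw [hKdef]; abel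
    have hPas : P = L + s • 1 := by rw [hLdef]; abel
    have hQL : Q * L = r⁻¹ • L := by
      rw [hQas, add_mul, hKL, smul_mul_assoc, one_mul, zero_add]
    have hPL : P * L = s⁻¹ • L := by
      rw [hPas, add_mul, hLL, smul_mul_assoc, one_mul, ← add_smul]
      congr 1; ring
    have hQK : Q * K = r • K := by
      rw [hQas, add_mul, hKK, smul_mul_assoc, one_mul, ← add_smul]
      congr 1; ring
    have hPK : P * K = s • K + L * K := by
      rw [hPas, add_mul, smul_mul_assoc, one_mul, add_comm]
    by_cases hLK : L * K = 0
    · -- p ∈ orbT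
      obtain ⟨i1, j1, hK1⟩ : ∃ i j, K i j ≠ 0 := by
        by_contra h'; push_neg at h'
        exact hKne (by ext i j; simpa using h' i j)
      obtain ⟨i2, j2, hL1⟩ : ∃ i j, L i j ≠ 0 := by
        by_contra h'; push_neg at h'
        exact hLne (by ext i j; simpa using h' i j)
      set u : Fin 2 → ℂ := fun i' => K i' j1 with hu_def
      set x : Fin 2 → ℂ := fun i' => L i' j2 with hx_def
      have hu : u ≠ 0 := fun h0 => hK1 (by simpa [hu_def] using congrFun h0 i1)
      have hx : x ≠ 0 := fun h0 => hL1 (by simpa [hx_def] using congrFun h0 i2)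
      have hQu : Q.mulVec u = r • u := by
        have h := col_mulVec Q K j1
        rw [hQK] at h
        exact h
      have hQx : Q.mulVec x = r⁻¹ • x := by
        have h := col_mulVec Q L j2
        rw [hQL] at h
        exact h
      have hPx : P.mulVec x = s⁻¹ • x := by
        have h := col_mulVec P L j2
        rw [hPL] at h
        exact h
      have hPu : P.mulVec u = s • u + (0:ℂ) • x := by
        have h := col_mulVec P K j1
        rw [hPK, hLK, add_zero] at h
        rw [zero_smul, add_zero]
        exact h
      obtain ⟨A, h1, h2⟩ := keyLemma s r hrr P Q u x 0 0 1 one_ne_zero (mul_zero 1)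
        hu hx hQu hQx hPu hPx
      exact ⟨A, by rw [Prod.ext_iff]; exact ⟨h1, h2⟩⟩
    · -- p ∈ orbO0, contradiction
      exfalso
      apply hpn
      obtain ⟨i1, j1, hLK1⟩ : ∃ i j, (L * K) i j ≠ 0 := by
        by_contra h'; push_neg at h'
        exact hLK (by ext i j; simpa using h' i j)
      set u : Fin 2 → ℂ := fun i' => K i' j1 with hu_def
      set x : Fin 2 → ℂ := fun i' => (L * K) i' j1 with hx_def
      have hx : x ≠ 0 := fun h0 => hLK1 (by simpa [hx_def] using congrFun h0 i1)
      have hxLu : L.mulVec u = x := by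
        have h := col_mulVec L K j1
        exact h
      have hu : u ≠ 0 := by
        intro h0
        apply hx
        rw [← hxLu, h0, Matrix.mulVec_zero]
      have hQu : Q.mulVec u = r • u := by
        have h := col_mulVec Q K j1
        rw [hQK] at h
        exact h
      have hQx : Q.mulVec x = r⁻¹ • x := by
        have h := col_mulVec Q (L * K) j1
        rw [← mul_assoc, hQL, smul_mul_assoc] at h
        exact h
      have hPx : P.mulVec x = s⁻¹ • x := by
        have h := col_mulVec P (L * K) j1
        rw [← mul_assoc, hPL, smul_mul_assoc] at h
        exact h
      have hPu : P.mulVec u = s • u + (1:ℂ) • x := by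
        have h := col_mulVec P K j1
        rw [hPK] at h
        rw [one_smul]
        rw [h, ← hxLu]
        funext i
        simp [hu_def, Matrix.add_apply, Matrix.smul_apply, hxLu]
        fin_cases i <;> simp [Matrix.mul_apply, Fin.sum_univ_two]
      obtain ⟨A, h1, h2⟩ := keyLemma s r hrr P Q u x 1 (s - s⁻¹) (s - s⁻¹) hΔ (mul_one _)
        hu hx hQu hQx hPu hPx
      exact ⟨A, by rw [Prod.ext_iff]; exact ⟨h1, h2⟩⟩
  · intro p hpT
    constructor
    · obtain ⟨A, hp⟩ := hpT
      rw [hp]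
      exact orbT_subset_closure s r A
    · exact orbT_disjoint s r hs hr hs2 hr2 p hpT
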